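/- (Approximation property in the stiff limit.) Assume Q, A, Q̃_Δ and Ã are invertible. Then there exist constants c > 0 and μ* > 0 such that for all μ ≥ μ*, the matrices C(μ) and P̃(μ) are invertible and ‖ C(μ)^{-1} − T_C^F · P̃(μ)^{-1} · T_F^C ‖ ≤ c / μ. -/

import Mathlib

/-!
STATEMENT 14 (Approximation property in the stiff limit): Assume Q, A, Q̃_Δ and Ã
are invertible. Then there exist c > 0 and μ* > 0 such that for all μ ≥ μ*, the
matrices C(μ) and P̃(μ) are invertible and
‖ C(μ)⁻¹ − T_C^F P̃(μ)⁻¹ T_F^C ‖ ≤ c / μ.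
-/

noncomputable section

open Matrix
open scoped Kronecker

/-- Complexification of a real matrix. -/
def cmplx {m n : Type*} (A : Matrix m n ℝ) : Matrix m n ℂ := A.map (fun x => (x : ℂ))

/-- The matrix `E` with ones on the first subdiagonal and zeros elsewhere. -/
def Emat (L : ℕ) : Matrix (Fin L) (Fin L) ℂ :=
  Matrix.of fun i j => if (i : ℕ) = (j : ℕ) + 1 then 1 else 0

/-- The matrix `N_M` whose last column consists of ones, all other entries zero. -/
def Nmat (M : ℕ) : Matrix (Fin M) (Fin M) ℂ :=
  Matrix.of fun _ j => if (j : ℕ) = M - 1 then 1 else 0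

/-- `H = N_M ⊗ I_N`. -/
def Hmat (M N : ℕ) : Matrix (Fin M × Fin N) (Fin M × Fin N) ℂ :=
  Nmat M ⊗ₖ (1 : Matrix (Fin N) (Fin N) ℂ)

/-- `E ⊗ H`. -/
def EH (L M N : ℕ) : Matrix (Fin L × Fin M × Fin N) (Fin L × Fin M × Fin N) ℂ :=
  Emat L ⊗ₖ Hmat M N

/-- The composite collocation matrix `C(μ) = I − μ (I_L ⊗ Q ⊗ A) − E ⊗ H`. -/
def Cmat (L : ℕ) {M N : ℕ} (Q : Matrix (Fin M) (Fin M) ℝ) (A : Matrix (Fin N) (Fin N) ℂ)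
    (μ : ℝ) : Matrix (Fin L × Fin M × Fin N) (Fin L × Fin M × Fin N) ℂ :=
  1 - (μ : ℂ) • ((1 : Matrix (Fin L) (Fin L) ℂ) ⊗ₖ (cmplx Q ⊗ₖ A)) - EH L M N

/-- The approximative block Jacobi preconditioner `P̂(μ) = I − μ (I_L ⊗ Q_Δ ⊗ A)`. -/
def Phat (L : ℕ) {M N : ℕ} (QΔ : Matrix (Fin M) (Fin M) ℝ) (A : Matrix (Fin N) (Fin N) ℂ)
    (μ : ℝ) : Matrix (Fin L × Fin M × Fin N) (Fin L × Fin M × Fin N) ℂ :=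
  1 - (μ : ℂ) • ((1 : Matrix (Fin L) (Fin L) ℂ) ⊗ₖ (cmplx QΔ ⊗ₖ A))

/-- The smoother iteration matrix `T_S(μ) = I − P̂(μ)⁻¹ C(μ)`. -/
def Tsmooth (L : ℕ) {M N : ℕ} (Q QΔ : Matrix (Fin M) (Fin M) ℝ)
    (A : Matrix (Fin N) (Fin N) ℂ) (μ : ℝ) :
    Matrix (Fin L × Fin M × Fin N) (Fin L × Fin M × Fin N) ℂ :=
  1 - (Phat L QΔ A μ)⁻¹ * Cmat L Q A μ

/-- Restriction operator `T_F^C = I_L ⊗ T_{F,Q}^C ⊗ T_{F,A}^C`. -/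
def TFCmat (L : ℕ) {M N M' N' : ℕ} (TFQ : Matrix (Fin M') (Fin M) ℝ)
    (TFA : Matrix (Fin N') (Fin N) ℂ) :
    Matrix (Fin L × Fin M' × Fin N') (Fin L × Fin M × Fin N) ℂ :=
  (1 : Matrix (Fin L) (Fin L) ℂ) ⊗ₖ (cmplx TFQ ⊗ₖ TFA)

/-- Interpolation operator `T_C^F = I_L ⊗ T_{C,Q}^F ⊗ T_{C,A}^F`. -/
def TCFmat (L : ℕ) {M N M' N' : ℕ} (TCQ : Matrix (Fin M) (Fin M') ℝ)
    (TCA : Matrix (Fin N) (Fin N') ℂ) :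
    Matrix (Fin L × Fin M × Fin N) (Fin L × Fin M' × Fin N') ℂ :=
  (1 : Matrix (Fin L) (Fin L) ℂ) ⊗ₖ (cmplx TCQ ⊗ₖ TCA)

/-- The coarse approximative block Gauss-Seidel preconditioner
`P̃(μ) = I − μ (I_L ⊗ Q̃_Δ ⊗ Ã) − E ⊗ H̃`. -/
def Ptilde (L : ℕ) {M' N' : ℕ} (QΔt : Matrix (Fin M') (Fin M') ℝ)
    (At : Matrix (Fin N') (Fin N') ℂ) (μ : ℝ) :
    Matrix (Fin L × Fin M' × Fin N') (Fin L × Fin M' × Fin N') ℂ :=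
  1 - (μ : ℂ) • ((1 : Matrix (Fin L) (Fin L) ℂ) ⊗ₖ (cmplx QΔt ⊗ₖ At)) - EH L M' N'

/-- The coarse-grid correction iteration matrix
`T_CGC(μ) = I − T_C^F P̃(μ)⁻¹ T_F^C C(μ)`. -/
def Tcgc (L : ℕ) {M N M' N' : ℕ} (Q : Matrix (Fin M) (Fin M) ℝ)
    (A : Matrix (Fin N) (Fin N) ℂ)
    (QΔt : Matrix (Fin M') (Fin M') ℝ) (At : Matrix (Fin N') (Fin N') ℂ)
    (TFQ : Matrix (Fin M') (Fin M) ℝ) (TFA : Matrix (Fin N') (Fin N) ℂ)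
    (TCQ : Matrix (Fin M) (Fin M') ℝ) (TCA : Matrix (Fin N) (Fin N') ℂ) (μ : ℝ) :
    Matrix (Fin L × Fin M × Fin N) (Fin L × Fin M × Fin N) ℂ :=
  1 - TCFmat L TCQ TCA * (Ptilde L QΔt At μ)⁻¹ * TFCmat L TFQ TFA * Cmat L Q A μ

/-- The operator norm induced by the Euclidean vector norm. -/
def opNorm {n : Type*} [Fintype n] [DecidableEq n] (A : Matrix n n ℂ) : ℝ :=
  ‖Matrix.toEuclideanCLM (𝕜 := ℂ) A‖

open scoped Matrix.Norms.L2Operator in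
lemma aux_inv {R : Type*} [NormedRing R] [NormedAlgebra ℂ R] [CompleteSpace R]
    (k : Rˣ) (b : R) :
    ∃ c > (0:ℝ), ∃ μs > (0:ℝ), ∀ μ : ℝ, μs ≤ μ →
      ∃ u : Rˣ, (u : R) = b - (μ:ℂ) • (k : R) ∧ ‖((u⁻¹ : Rˣ) : R)‖ ≤ c / μ := by
  set Ki : ℝ := ‖((k⁻¹ : Rˣ) : R)‖ with hKi
  have hKi0 : 0 ≤ Ki := norm_nonneg _
  have hb0 : 0 ≤ ‖b‖ := norm_nonneg _
  have h10 : 0 ≤ ‖(1:R)‖ := norm_nonneg _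
  refine ⟨(‖(1:R)‖+1)^2 * (Ki+1), by positivity, 2*(Ki*‖b‖)+1, by positivity, ?_⟩
  intro μ hμ
  have hμ1 : 1 ≤ μ := by nlinarith
  have hμ0 : (0:ℝ) < μ := lt_of_lt_of_le one_pos hμ1
  have hz : (μ:ℂ) ≠ 0 := by exact_mod_cast hμ0.ne'
  set t : R := ((μ:ℂ)⁻¹) • (((k⁻¹ : Rˣ) : R) * b) with ht_def
  have hnormμinv : ‖(μ:ℂ)⁻¹‖ = μ⁻¹ := by
    rw [norm_inv, Complex.norm_real, Real.norm_eq_abs, abs_of_pos hμ0]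
  have htle : ‖t‖ ≤ μ⁻¹ * (Ki * ‖b‖) := by
    rw [ht_def, norm_smul, hnormμinv]
    exact mul_le_mul_of_nonneg_left (norm_mul_le _ _) (by positivity)
  have hinvμ : 0 ≤ μ⁻¹ := by positivity
  have ht : ‖t‖ ≤ 1/2 := by
    refine htle.trans ?_
    nlinarith [mul_le_mul_of_nonneg_right hμ hinvμ, mul_inv_cancel₀ hμ0.ne']
  have htlt : ‖t‖ < 1 := lt_of_le_of_lt ht (by norm_num)
  set w : Rˣ := Units.oneSub t htlt with hw
  set za : ℂˣ := Units.mk0 (μ:ℂ) hz with hza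
  set ka : Rˣ := Units.map (algebraMap ℂ R).toMonoidHom za with hka
  refine ⟨-(ka * k * w), ?_, ?_⟩
  · have hk1 : (k:R) * ((w:R)) = (k:R) - (μ:ℂ)⁻¹ • b := by
      have : (w:R) = 1 - t := rfl
      rw [this, mul_sub, mul_one, ht_def, mul_smul_comm, ← mul_assoc, Units.mul_inv, one_mul]
    have hkaval : (ka : R) = algebraMap ℂ R (μ:ℂ) := rfl
    calc ((-(ka * k * w) : Rˣ) : R) = -((ka:R) * ((k:R) * (w:R))) := by
          simp [Units.val_mul, mul_assoc]
      _ = -((μ:ℂ) • ((k:R) * (w:R))) := by rw [hkaval, ← Algebra.smul_def]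
      _ = b - (μ:ℂ) • (k:R) := by
          rw [hk1, smul_sub, smul_smul, mul_inv_cancel₀ hz, one_smul, neg_sub]
  · have hwinv : ((w⁻¹ : Rˣ) : R) = ∑' n : ℕ, t ^ n := rfl
    have hwb : ‖((w⁻¹ : Rˣ) : R)‖ ≤ ‖(1:R)‖ + 1 := by
      rw [hwinv]
      have := tsum_geometric_le_of_norm_lt_one t htlt
      have h2 : (1 - ‖t‖)⁻¹ ≤ 2 := by
        rw [inv_le_comm₀ (by linarith) (by norm_num)]
        linarith
      linarith
    have hkainv : ((ka⁻¹ : Rˣ) : R) = ((μ:ℂ)⁻¹) • (1:R) := by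
      have : ((ka⁻¹ : Rˣ) : R) = algebraMap ℂ R ((μ:ℂ)⁻¹) := rfl
      rw [this, Algebra.algebraMap_eq_smul_one]
    have hkab : ‖((ka⁻¹ : Rˣ) : R)‖ = μ⁻¹ * ‖(1:R)‖ := by
      rw [hkainv, norm_smul, hnormμinv]
    have hexp : ((-(ka * k * w))⁻¹ : Rˣ) = -((w⁻¹ : Rˣ) * (k⁻¹ : Rˣ) * (ka⁻¹ : Rˣ)) := by
      rw [inv_neg, _root_.mul_inv_rev, _root_.mul_inv_rev, mul_assoc]
    rw [hexp]
    calc ‖((-(w⁻¹ * k⁻¹ * ka⁻¹) : Rˣ) : R)‖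
        = ‖((w⁻¹:Rˣ):R) * ((k⁻¹:Rˣ):R) * ((ka⁻¹:Rˣ):R)‖ := by
          simp [Units.val_mul]
      _ ≤ ‖((w⁻¹:Rˣ):R)‖ * ‖((k⁻¹:Rˣ):R)‖ * ‖((ka⁻¹:Rˣ):R)‖ :=
          (norm_mul_le _ _).trans (mul_le_mul_of_nonneg_right (norm_mul_le _ _) (norm_nonneg _))
      _ ≤ (‖(1:R)‖+1) * Ki * (μ⁻¹ * ‖(1:R)‖) := by
          rw [hkab]
          gcongr
      _ ≤ (‖(1:R)‖+1)^2 * (Ki+1) / μ := by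
          rw [div_eq_mul_inv]
          have hfact : (‖(1:R)‖+1) * Ki * ‖(1:R)‖ ≤ (‖(1:R)‖+1)^2 * (Ki+1) := by nlinarith
          nlinarith [mul_le_mul_of_nonneg_right hfact hinvμ]

lemma isUnit_kron {m n : Type*} [Fintype m] [Fintype n] [DecidableEq m] [DecidableEq n]
    {A : Matrix m m ℂ} {B : Matrix n n ℂ} (hA : IsUnit A) (hB : IsUnit B) :
    IsUnit (A ⊗ₖ B) := by
  obtain ⟨a, rfl⟩ := hA
  obtain ⟨b, rfl⟩ := hB
  refine ⟨⟨(a : Matrix m m ℂ) ⊗ₖ (b : Matrix n n ℂ),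
    ((a⁻¹ : _ˣ) : Matrix m m ℂ) ⊗ₖ ((b⁻¹ : _ˣ) : Matrix n n ℂ), ?_, ?_⟩, rfl⟩
  · rw [← Matrix.mul_kronecker_mul, Units.mul_inv, Units.mul_inv, Matrix.one_kronecker_one]
  · rw [← Matrix.mul_kronecker_mul, Units.inv_mul, Units.inv_mul, Matrix.one_kronecker_one]

open scoped Matrix.Norms.L2Operator in
theorem stmt_14 (L M N M' N' : ℕ) (hL : 0 < L) (hM : 0 < M) (hN : 0 < N)
    (hM' : 0 < M') (hN' : 0 < N')
    (Q : Matrix (Fin M) (Fin M) ℝ) (A : Matrix (Fin N) (Fin N) ℂ)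
    (QΔt : Matrix (Fin M') (Fin M') ℝ) (At : Matrix (Fin N') (Fin N') ℂ)
    (TFQ : Matrix (Fin M') (Fin M) ℝ) (TFA : Matrix (Fin N') (Fin N) ℂ)
    (TCQ : Matrix (Fin M) (Fin M') ℝ) (TCA : Matrix (Fin N) (Fin N') ℂ)
    (hQ : IsUnit Q) (hA : IsUnit A) (hQΔt : IsUnit QΔt) (hAt : IsUnit At) :
    ∃ c > (0 : ℝ), ∃ μs > (0 : ℝ), ∀ μ : ℝ, μs ≤ μ →
      IsUnit (Cmat L Q A μ) ∧ IsUnit (Ptilde L QΔt At μ) ∧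
      opNorm ((Cmat L Q A μ)⁻¹ -
          TCFmat L TCQ TCA * (Ptilde L QΔt At μ)⁻¹ * TFCmat L TFQ TFA) ≤ c / μ := by
  classical
  have hQC : IsUnit (cmplx Q) := hQ.map (RingHom.mapMatrix (Complex.ofRealHom))
  have hQtC : IsUnit (cmplx QΔt) := hQΔt.map (RingHom.mapMatrix (Complex.ofRealHom))
  have hKC : IsUnit ((1 : Matrix (Fin L) (Fin L) ℂ) ⊗ₖ (cmplx Q ⊗ₖ A)) :=
    isUnit_kron isUnit_one (isUnit_kron hQC hA)
  have hKP : IsUnit ((1 : Matrix (Fin L) (Fin L) ℂ) ⊗ₖ (cmplx QΔt ⊗ₖ At)) :=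
    isUnit_kron isUnit_one (isUnit_kron hQtC hAt)
  obtain ⟨cC, hcC, μC, hμCpos, hC⟩ := aux_inv hKC.unit (1 - EH L M N)
  obtain ⟨cP, hcP, μP, hμPpos, hP⟩ := aux_inv hKP.unit (1 - EH L M' N')
  set T1 := TCFmat L TCQ TCA (N := N) (N' := N') with hT1
  set T2 := TFCmat L TFQ TFA with hT2
  have hT1n : (0:ℝ) ≤ ‖T1‖ := norm_nonneg _
  have hT2n : (0:ℝ) ≤ ‖T2‖ := norm_nonneg _
  refine ⟨cC + (‖T1‖+1) * cP * (‖T2‖+1),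
    add_pos hcC (mul_pos (mul_pos (by linarith) hcP) (by linarith)), max μC μP,
    lt_max_iff.mpr (Or.inl hμCpos), ?_⟩
  intro μ hμ
  have hμ0 : (0:ℝ) < μ := lt_of_lt_of_le (lt_max_iff.mpr (Or.inl hμCpos)) hμ
  obtain ⟨uC, huC, hbC⟩ := hC μ ((le_max_left _ _).trans hμ)
  obtain ⟨uP, huP, hbP⟩ := hP μ ((le_max_right _ _).trans hμ)
  have hCeq : (uC : Matrix (Fin L × Fin M × Fin N) (Fin L × Fin M × Fin N) ℂ)
      = Cmat L Q A μ := by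
    rw [huC, IsUnit.unit_spec, Cmat, sub_right_comm]
  have hPeq : (uP : Matrix (Fin L × Fin M' × Fin N') (Fin L × Fin M' × Fin N') ℂ)
      = Ptilde L QΔt At μ := by
    rw [huP, IsUnit.unit_spec, Ptilde, sub_right_comm]
  have hCinv : (Cmat L Q A μ)⁻¹ = ((uC⁻¹ : _ˣ) : Matrix _ _ ℂ) := by
    rw [Matrix.nonsing_inv_eq_ringInverse, ← hCeq, Ring.inverse_unit]
  have hPinv : (Ptilde L QΔt At μ)⁻¹ = ((uP⁻¹ : _ˣ) : Matrix _ _ ℂ) := by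
    rw [Matrix.nonsing_inv_eq_ringInverse, ← hPeq, Ring.inverse_unit]
  refine ⟨⟨uC, hCeq⟩, ⟨uP, hPeq⟩, ?_⟩
  have key : ∀ (X : Matrix (Fin L × Fin M × Fin N) (Fin L × Fin M × Fin N) ℂ)
      (Y : Matrix (Fin L × Fin M' × Fin N') (Fin L × Fin M' × Fin N') ℂ),
      ‖X‖ ≤ cC/μ → ‖Y‖ ≤ cP/μ →
      ‖X - T1 * Y * T2‖ ≤ (cC + (‖T1‖+1) * cP * (‖T2‖+1))/μ := by
    intro X Y hX hY
    have hY0 : (0:ℝ) ≤ ‖Y‖ := norm_nonneg _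
    calc ‖X - T1 * Y * T2‖ ≤ ‖X‖ + ‖T1 * Y * T2‖ := norm_sub_le _ _
      _ ≤ cC/μ + ‖T1‖ * (cP/μ) * ‖T2‖ := by
          refine add_le_add hX ?_
          calc ‖T1 * Y * T2‖ ≤ ‖T1 * Y‖ * ‖T2‖ := Matrix.l2_opNorm_mul _ _
            _ ≤ (‖T1‖ * ‖Y‖) * ‖T2‖ :=
                mul_le_mul_of_nonneg_right (Matrix.l2_opNorm_mul _ _) hT2n
            _ ≤ ‖T1‖ * (cP/μ) * ‖T2‖ := by gcongr
      _ ≤ (cC + (‖T1‖+1) * cP * (‖T2‖+1))/μ := by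
          have h2 : ‖T1‖*cP*‖T2‖ ≤ (‖T1‖+1)*cP*(‖T2‖+1) := by nlinarith
          rw [show ‖T1‖*(cP/μ)*‖T2‖ = (‖T1‖*cP*‖T2‖)/μ by ring, ← add_div]
          gcongr
  have := key _ _ hbC hbP
  rw [← hCinv, ← hPinv] at this
  exact this
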